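/- Suppose f is a real-valued function defined on an interval [a,b], c is a point in the open interval (a, (a+b)/2), f(c−x) + f(c+x) = 2 f(c) whenever both c−x and c+x lie in [a,b], and the restriction of f to [c,b] is convex. Let h be the affine function joining the points (a, f(a)) and (2c−a, f(2c−a)). Then the function g defined on [a,b] by g(x) = h(x) for x ∈ [a, 2c−a] and g(x) = f(x) for x ∈ [2c−a, b] is convex on [a,b]. -/

import Mathlib

/-- The key construction in the proof of Theorem 1: gluing the affine function `h`
joining `(a, f a)` and `(2c - a, f (2c - a))` with `f` on `[2c - a, b]` yields a
convex function on `[a, b]`, whenever `f` is point-symmetric about `(c, f c)` and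
convex on `[c, b]`. -/
theorem glued_function_convex
    (a b c : ℝ) (hc : c ∈ Set.Ioo a ((a + b) / 2))
    (f : ℝ → ℝ)
    (hsym : ∀ x : ℝ, c - x ∈ Set.Icc a b → c + x ∈ Set.Icc a b →
      f (c - x) + f (c + x) = 2 * f c)
    (hconv : ConvexOn ℝ (Set.Icc c b) f)
    (h : ℝ → ℝ)
    (hh : h = fun x => f a + (f (2 * c - a) - f a) / ((2 * c - a) - a) * (x - a))
    (g : ℝ → ℝ)
    (hg : g = fun x => if x ≤ 2 * c - a then h x else f x) :
    ConvexOn ℝ (Set.Icc a b) g := by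
  obtain ⟨hac, hcab⟩ := hc
  have hmb : 2 * c - a < b := by linarith
  have ham : a < 2 * c - a := by linarith
  have hcm : c < 2 * c - a := by linarith
  have hcb : c < b := by linarith
  have hfa : f a + f (2 * c - a) = 2 * f c := by
    have e1 : c - (c - a) = a := by ring
    have e2 : c + (c - a) = 2 * c - a := by ring
    have := hsym (c - a)
      (by rw [e1]; exact ⟨le_refl a, by linarith⟩)
      (by rw [e2]; exact ⟨by linarith, by linarith⟩)
    rwa [e1, e2] at this
  set s : ℝ := (f (2 * c - a) - f a) / ((2 * c - a) - a) with hs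
  have hden : ((2 * c - a) - a) ≠ 0 := by intro h0; linarith
  have hden2 : ((2 * c - a) - c) ≠ 0 := by intro h0; linarith
  have hm_eq : f a + s * ((2 * c - a) - a) = f (2 * c - a) := by
    rw [hs]; field_simp; ring
  have hsval : s = (f (2 * c - a) - f c) / ((2 * c - a) - c) := by
    rw [hs, div_eq_div_iff hden hden2]
    linear_combination (a - c) * hfa
  have hx_h : ∀ t : ℝ, h t = f (2 * c - a) + s * (t - (2 * c - a)) := by
    intro t
    rw [hh]
    show f a + s * (t - a) = _
    linear_combination hm_eq
  have hA : ∀ t : ℝ, 2 * c - a < t → t ≤ b →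
      s * (t - (2 * c - a)) ≤ f t - f (2 * c - a) := by
    intro t h1 h2
    have := hconv.slope_mono_adjacent ⟨le_refl c, hcb.le⟩
      (⟨by linarith, h2⟩ : t ∈ Set.Icc c b) hcm h1
    rw [← hsval] at this
    rw [le_div_iff₀ (by linarith)] at this
    exact this
  have hfleq : ∀ t : ℝ, 2 * c - a ≤ t → t ≤ b →
      f (2 * c - a) + s * (t - (2 * c - a)) ≤ f t := by
    intro t h1 h2
    rcases eq_or_lt_of_le h1 with he | hl
    · rw [← he]; simp
    · linarith [hA t hl h2]
  have main : ∀ x ∈ Set.Icc a b, ∀ y ∈ Set.Icc a b, x ≤ y →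
      ∀ p q : ℝ, 0 ≤ p → 0 ≤ q → p + q = 1 →
      g (p * x + q * y) ≤ p * g x + q * g y := by
    intro x hx y hy hxy p q hp hq hpq
    set z : ℝ := p * x + q * y with hz
    have ezx : z - x = q * (y - x) := by rw [hz]; linear_combination x * hpq
    have ezy : y - z = p * (y - x) := by rw [hz]; linear_combination (-y) * hpq
    have hzx : x ≤ z := by nlinarith [mul_nonneg hq (sub_nonneg.2 hxy)]
    have hzy : z ≤ y := by nlinarith [mul_nonneg hp (sub_nonneg.2 hxy)]
    simp only [hg]
    by_cases hym : y ≤ 2 * c - a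
    · rw [if_pos (le_trans hzy hym), if_pos (le_trans hxy hym), if_pos hym]
      simp only [hx_h]
      have : p * (f (2 * c - a) + s * (x - (2 * c - a)))
          + q * (f (2 * c - a) + s * (y - (2 * c - a)))
          = f (2 * c - a) + s * (z - (2 * c - a)) := by
        rw [hz]; linear_combination (f (2 * c - a) - s * (2 * c - a)) * hpq
      linarith [this]
    · push_neg at hym
      rw [if_neg (not_le.mpr hym)]
      by_cases hxm : x ≤ 2 * c - a
      · rw [if_pos hxm]
        simp only [hx_h]
        by_cases hzm : z ≤ 2 * c - a
        · rw [if_pos hzm]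
          have hfy : f (2 * c - a) + s * (y - (2 * c - a)) ≤ f y :=
            hfleq y hym.le hy.2
          have heq : p * (f (2 * c - a) + s * (x - (2 * c - a)))
              + q * (f (2 * c - a) + s * (y - (2 * c - a)))
              = f (2 * c - a) + s * (z - (2 * c - a)) := by
            rw [hz]; linear_combination (f (2 * c - a) - s * (2 * c - a)) * hpq
          nlinarith [mul_le_mul_of_nonneg_left hfy hq, heq]
        · rw [if_neg hzm]
          push_neg at hzm
          rcases eq_or_lt_of_le hzy with hey | hly
          · -- z = y, forces p = 0
            have hxlty : x < y := by linarith
            have hp0 : p = 0 := by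
              have : p * (y - x) = 0 := by rw [← ezy, hey]; ring
              rcases mul_eq_zero.1 this with h0 | h0
              · exact h0
              · exfalso; linarith
            have hq1 : q = 1 := by linarith
            rw [hey, hp0, hq1]; simp
          · -- m < z < y : convexity of f
            have hzlt : (2 * c - a) < z := hzm
            have hslope2 := hconv.slope_mono_adjacent
              (⟨hcm.le, hmb.le⟩ : (2 * c - a) ∈ Set.Icc c b)
              (⟨by linarith, hy.2⟩ : y ∈ Set.Icc c b) hzlt hly
            rw [div_le_div_iff₀ (by linarith) (by linarith)] at hslope2
            have fz_le : (y - (2 * c - a)) * f z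
                ≤ (y - z) * f (2 * c - a) + (z - (2 * c - a)) * f y := by
              nlinarith [hslope2]
            have hAy : 0 ≤ f y - f (2 * c - a) - s * (y - (2 * c - a)) := by
              linarith [hA y hym hy.2]
            have prodpos : 0 ≤ p * ((2 * c - a) - x)
                * (f y - f (2 * c - a) - s * (y - (2 * c - a))) :=
              mul_nonneg (mul_nonneg hp (by linarith)) hAy
            have ident : (y - (2 * c - a))
                * (p * (f (2 * c - a) + s * (x - (2 * c - a))) + q * f y)
                - ((y - z) * f (2 * c - a) + (z - (2 * c - a)) * f y)
                = p * ((2 * c - a) - x)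
                  * (f y - f (2 * c - a) - s * (y - (2 * c - a))) := by
              have hq1 : q = 1 - p := by linarith
              rw [hz, hq1]; ring
            have hfin : (y - (2 * c - a)) * f z
                ≤ (y - (2 * c - a))
                  * (p * (f (2 * c - a) + s * (x - (2 * c - a))) + q * f y) := by
              linarith [fz_le, prodpos, ident]
            exact (mul_le_mul_iff_right₀ (show (0:ℝ) < y - (2 * c - a) by linarith)).mp hfin
      · push_neg at hxm
        rw [if_neg (not_le.mpr hxm), if_neg (not_le.mpr (lt_of_lt_of_le hxm hzx))]
        have := hconv.2 (⟨by linarith, hx.2⟩ : x ∈ Set.Icc c b)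
          (⟨by linarith, hy.2⟩ : y ∈ Set.Icc c b) hp hq hpq
        simpa [smul_eq_mul] using this
  refine ⟨convex_Icc a b, ?_⟩
  intro x hx y hy p q hp hq hpq
  simp only [smul_eq_mul]
  rcases le_total x y with hxy | hyx
  · exact main x hx y hy hxy p q hp hq hpq
  · have := main y hy x hx hyx q p hq hp (by linarith)
    rw [show p * x + q * y = q * y + p * x from by ring]
    linarith [this]
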